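/- Let a>0, b>0, c≥−1/b, φ₀∈ℝ, and let ψ:[-a,a]→ℂ be continuously differentiable. Define φ(y):=(cosh y)^{−1/2}·ψ(y) for y∈[-a,a], and set t:=(1/2)·tanh(a). Then φ satisfies φ(a)=√(1+bc)·e^{iφ₀}·φ(−a)+b·φ′(−a) and φ′(a)=c·φ(−a)+√(1+bc)·e^{−iφ₀}·φ′(−a) if and only if ψ satisfies ψ(a)=(√(1+bc)·e^{iφ₀}+t·b)·ψ(−a)+b·ψ′(−a) and ψ′(a)=(c+2t·√(1+bc)·cos(φ₀)+t²·b)·ψ(−a)+(√(1+bc)·e^{−iφ₀}+t·b)·ψ′(−a). -/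

import Mathlib

/-- the unitary map `U₋ψ = (cosh x)^{-1/2} ψ` transforms
connected PT-symmetric boundary conditions on the negatively curved strip into
modified connected boundary conditions with matrix `B₋` (where
`t = (1/2) tanh a`). -/
theorem pt_negative_curvature_connected_bc
    (a b c φ₀ : ℝ) (ha : 0 < a) (hb : 0 < b) (hc : -(1 / b) ≤ c)
    (ψ ψ' : ℝ → ℂ)
    (hd : ∀ x ∈ Set.Icc (-a) a, HasDerivAt ψ (ψ' x) x)
    (hcont : ContinuousOn ψ' (Set.Icc (-a) a))
    (φ : ℝ → ℂ)
    (hφ : φ = fun y : ℝ => ((Real.cosh y ^ (-(1 / 2 : ℝ)) : ℝ) : ℂ) * ψ y)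
    (t : ℝ) (ht : t = Real.tanh a / 2)
    (Da Db : ℂ) (hDa : HasDerivAt φ Da a) (hDb : HasDerivAt φ Db (-a)) :
    (φ a = ((Real.sqrt (1 + b * c) : ℝ) : ℂ) * Complex.exp (Complex.I * (φ₀ : ℂ)) * φ (-a)
        + (b : ℂ) * Db ∧
     Da = (c : ℂ) * φ (-a)
        + ((Real.sqrt (1 + b * c) : ℝ) : ℂ) * Complex.exp (-(Complex.I * (φ₀ : ℂ))) * Db) ↔
    (ψ a = (((Real.sqrt (1 + b * c) : ℝ) : ℂ) * Complex.exp (Complex.I * (φ₀ : ℂ))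
          + (t : ℂ) * (b : ℂ)) * ψ (-a) + (b : ℂ) * ψ' (-a) ∧
     ψ' a = ((c + 2 * t * Real.sqrt (1 + b * c) * Real.cos φ₀ + t ^ 2 * b : ℝ) : ℂ) * ψ (-a)
        + (((Real.sqrt (1 + b * c) : ℝ) : ℂ) * Complex.exp (-(Complex.I * (φ₀ : ℂ)))
          + (t : ℂ) * (b : ℂ)) * ψ' (-a)) := by
  set k : ℝ := Real.cosh a ^ (-(1 / 2 : ℝ)) with hkdef
  have hch : (0 : ℝ) < Real.cosh a := Real.cosh_pos a
  have hk0 : (0 : ℝ) < k := Real.rpow_pos_of_pos hch _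
  have hkC : (k : ℂ) ≠ 0 := by exact_mod_cast hk0.ne'
  -- generic derivative of φ
  have hderiv : ∀ y ∈ Set.Icc (-a) a,
      HasDerivAt φ
        (((Real.sinh y * (-(1 / 2 : ℝ)) * Real.cosh y ^ (-(1 / 2 : ℝ) - 1) : ℝ) : ℂ) * ψ y
          + ((Real.cosh y ^ (-(1 / 2 : ℝ)) : ℝ) : ℂ) * ψ' y) y := by
    intro y hy
    have h1 : HasDerivAt (fun y : ℝ => Real.cosh y ^ (-(1 / 2 : ℝ)))
        (Real.sinh y * (-(1 / 2 : ℝ)) * Real.cosh y ^ (-(1 / 2 : ℝ) - 1)) y :=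
      (Real.hasDerivAt_cosh y).rpow_const (Or.inl (Real.cosh_pos y).ne')
    have h2 := (h1.ofReal_comp).mul (hd y hy)
    rw [hφ]
    exact h2
  have hmem_a : a ∈ Set.Icc (-a) a := ⟨by linarith, le_refl a⟩
  have hmem_ma : -a ∈ Set.Icc (-a) a := ⟨le_refl _, by linarith⟩
  -- identity: sinh y * (-(1/2)) * cosh y ^ (-(1/2)-1) at a and -a
  have hkey : Real.sinh a * (-(1 / 2 : ℝ)) * Real.cosh a ^ (-(1 / 2 : ℝ) - 1) = -(t * k) := by
    have hpow : Real.cosh a ^ (-(1 / 2 : ℝ) - 1) = k / Real.cosh a := by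
      rw [show (-(1 / 2 : ℝ) - 1) = (-(1 / 2 : ℝ)) + (-1 : ℝ) by ring,
        Real.rpow_add hch, Real.rpow_neg_one, hkdef]
      ring
    rw [hpow, ht, Real.tanh_eq_sinh_div_cosh]
    field_simp
  have hcoshneg : Real.cosh (-a) = Real.cosh a := Real.cosh_neg a
  have hkeym : Real.sinh (-a) * (-(1 / 2 : ℝ)) * Real.cosh (-a) ^ (-(1 / 2 : ℝ) - 1) = t * k := by
    rw [Real.sinh_neg, hcoshneg]
    have := hkey
    linarith [hkey]
  have hDa' : Da = (k : ℂ) * ψ' a - ((t * k : ℝ) : ℂ) * ψ a := by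
    have := hDa.unique (hderiv a hmem_a)
    rw [this, hkey, hkdef]
    push_cast
    ring
  have hDb' : Db = (k : ℂ) * ψ' (-a) + ((t * k : ℝ) : ℂ) * ψ (-a) := by
    have := hDb.unique (hderiv (-a) hmem_ma)
    rw [this, hkeym]
    rw [hcoshneg]
    push_cast
    ring
  have hφa : φ a = (k : ℂ) * ψ a := by rw [hφ]
  have hφma : φ (-a) = (k : ℂ) * ψ (-a) := by rw [hφ]; simp [hcoshneg, hkdef]
  have hcos : Complex.exp (Complex.I * (φ₀ : ℂ)) + Complex.exp (-(Complex.I * (φ₀ : ℂ)))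
      = 2 * Complex.cos (φ₀ : ℂ) := by
    rw [mul_comm Complex.I (φ₀ : ℂ), ← neg_mul, Complex.exp_mul_I, Complex.exp_mul_I,
      Complex.cos_neg, Complex.sin_neg]
    ring
  set S : ℂ := ((Real.sqrt (1 + b * c) : ℝ) : ℂ) with hS
  set E : ℂ := Complex.exp (Complex.I * (φ₀ : ℂ)) with hE
  set E' : ℂ := Complex.exp (-(Complex.I * (φ₀ : ℂ))) with hE'
  rw [hφa, hφma, hDa', hDb']
  constructor
  · rintro ⟨h1, h2⟩
    have g1 : ψ a = (S * E + (t : ℂ) * (b : ℂ)) * ψ (-a) + (b : ℂ) * ψ' (-a) := by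
      apply mul_left_cancel₀ hkC
      push_cast at h1 ⊢
      linear_combination h1
    refine ⟨g1, ?_⟩
    apply mul_left_cancel₀ hkC
    push_cast at h1 h2 ⊢
    linear_combination h2 + (t : ℂ) * (k : ℂ) * g1 + (t : ℂ) * S * (k : ℂ) * ψ (-a) * hcos
  · rintro ⟨g1, g2⟩
    push_cast at g1 g2 ⊢
    constructor
    · linear_combination (k : ℂ) * g1
    · linear_combination (k : ℂ) * g2 - (t : ℂ) * (k : ℂ) * g1
        - (t : ℂ) * S * (k : ℂ) * ψ (-a) * hcos
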